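/- Let S and J be hermitian involutions on a finite-dimensional complex inner product space, and let z be an eigenvector of SJ with eigenvalue λ satisfying |λ| = 1 and λ ≠ ±1. Then z and Jz are orthogonal, and the vectors Jz + λz and Jz − λz are nonzero eigenvectors of S with eigenvalues +1 and −1, respectively. -/

import Mathlib

open scoped InnerProductSpace

theorem stmt3 {V : Type*} [NormedAddCommGroup V] [InnerProductSpace ℂ V]
    [FiniteDimensional ℂ V]
    (S J : V →ₗ[ℂ] V)
    (hS : S.IsSymmetric) (hS2 : S ∘ₗ S = LinearMap.id)
    (hJ : J.IsSymmetric) (hJ2 : J ∘ₗ J = LinearMap.id)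
    (z : V) (hz : z ≠ 0) (lam : ℂ)
    (heig : S (J z) = lam • z) (hmod : ‖lam‖ = 1)
    (h1 : lam ≠ 1) (h2 : lam ≠ -1) :
    ⟪z, J z⟫_ℂ = 0 ∧
    (J z + lam • z ≠ 0 ∧ S (J z + lam • z) = J z + lam • z) ∧
    (J z - lam • z ≠ 0 ∧ S (J z - lam • z) = -(J z - lam • z)) := by
  have hsq : lam ^ 2 - 1 ≠ 0 := by
    intro h
    have : (lam - 1) * (lam + 1) = 0 := by linear_combination h
    rcases mul_eq_zero.mp this with h | h
    · exact h1 (by linear_combination h)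
    · exact h2 (by linear_combination h)
  have hcc : (starRingEnd ℂ) lam * lam = 1 := by
    have hn : Complex.normSq lam = 1 := by
      rw [Complex.normSq_eq_norm_sq, hmod]; norm_num
    rw [mul_comm, Complex.mul_conj, hn]; norm_num
  have hJJ : J (J z) = z := by
    have := LinearMap.ext_iff.mp hJ2 z; simpa using this
  have hSSJ : S (S (J z)) = J z := by
    have := LinearMap.ext_iff.mp hS2 (J z); simpa using this
  have hSz : S z = (starRingEnd ℂ) lam • J z := by
    have h : J z = lam • S z := by
      calc J z = S (S (J z)) := hSSJ.symm
        _ = S (lam • z) := by rw [heig]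
        _ = lam • S z := map_smul _ _ _
    calc S z = ((starRingEnd ℂ) lam * lam) • S z := by rw [hcc, one_smul]
      _ = (starRingEnd ℂ) lam • (lam • S z) := by rw [smul_smul]
      _ = (starRingEnd ℂ) lam • J z := by rw [← h]
  have horth : ⟪z, J z⟫_ℂ = 0 := by
    have key : ⟪z, J z⟫_ℂ = lam * lam * ⟪z, J z⟫_ℂ := by
      calc ⟪z, J z⟫_ℂ = ⟪z, S (S (J z))⟫_ℂ := by rw [hSSJ]
        _ = ⟪S z, S (J z)⟫_ℂ := (hS _ _).symm
        _ = ⟪(starRingEnd ℂ) lam • J z, lam • z⟫_ℂ := by rw [hSz, heig]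
        _ = lam * lam * ⟪J z, z⟫_ℂ := by
            simp [inner_smul_left, inner_smul_right]; ring
        _ = lam * lam * ⟪z, J z⟫_ℂ := by rw [hJ z z]
    have : (lam ^ 2 - 1) * ⟪z, J z⟫_ℂ = 0 := by linear_combination -key
    rcases mul_eq_zero.mp this with h | h
    · exact absurd h hsq
    · exact h
  refine ⟨horth, ⟨?_, ?_⟩, ⟨?_, ?_⟩⟩
  · intro h
    have hJz : J z = -(lam • z) := by linear_combination (norm := module) h
    have : z = (lam ^ 2) • z := by
      calc z = J (J z) := hJJ.symm
        _ = J (-(lam • z)) := by rw [hJz]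
        _ = -(lam • J z) := by rw [map_neg, map_smul]
        _ = -(lam • (-(lam • z))) := by rw [hJz]
        _ = (lam ^ 2) • z := by module
    have : (lam ^ 2 - 1) • z = 0 := by
      rw [sub_smul, one_smul, ← this, sub_self]
    exact hz (by simpa [hsq] using smul_eq_zero.mp this)
  · calc S (J z + lam • z) = S (J z) + lam • S z := by rw [map_add, map_smul]
      _ = lam • z + lam • ((starRingEnd ℂ) lam • J z) := by rw [heig, hSz]
      _ = lam • z + (lam * (starRingEnd ℂ) lam) • J z := by rw [smul_smul]
      _ = J z + lam • z := by rw [mul_comm, hcc, one_smul]; abel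
  · intro h
    have hJz : J z = lam • z := by linear_combination (norm := module) h
    have : z = (lam ^ 2) • z := by
      calc z = J (J z) := hJJ.symm
        _ = J (lam • z) := by rw [hJz]
        _ = lam • J z := by rw [map_smul]
        _ = lam • (lam • z) := by rw [hJz]
        _ = (lam ^ 2) • z := by module
    have : (lam ^ 2 - 1) • z = 0 := by
      rw [sub_smul, one_smul, ← this, sub_self]
    exact hz (by simpa [hsq] using smul_eq_zero.mp this)
  · calc S (J z - lam • z) = S (J z) - lam • S z := by rw [map_sub, map_smul]
      _ = lam • z - lam • ((starRingEnd ℂ) lam • J z) := by rw [heig, hSz]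
      _ = lam • z - (lam * (starRingEnd ℂ) lam) • J z := by rw [smul_smul]
      _ = -(J z - lam • z) := by rw [mul_comm, hcc, one_smul]; abel
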